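/- arXiv:2307.14054 — 2 statements merged into one kernel-verified Lean document; each statement's English description precedes it below -/
import Mathlib

section
/- For every integer a ≥ 1 and n ≥ 1, the metallic cube Π^a_n admits a perfect matching when its number of vertices is even, and a matching covering all but exactly one vertex (a semi-perfect/near-perfect matching) when its number of vertices is odd. -/
/-- Strings of length `n` over the alphabet `{0,1,…,a}` in which the letter `a`
occurs only immediately after a `0` (i.e. `a` appears only inside blocks `0a`). -/
def MetallicOK (a n : ℕ) (α : Fin n → Fin (a + 1)) : Prop :=
  ∀ i : Fin n, (α i : ℕ) = a →
    ∃ j : Fin n, (j : ℕ) + 1 = (i : ℕ) ∧ (α j : ℕ) = 0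

instance (a n : ℕ) : DecidablePred (MetallicOK a n) := fun α => by
  unfold MetallicOK; infer_instance

/-- Vertices of the metallic cube `Π^a_n`. -/
abbrev MetallicVertex (a n : ℕ) : Type :=
  {α : Fin n → Fin (a + 1) // MetallicOK a n α}

/-- The metallic cube `Π^a_n`: two strings are adjacent iff `Σ_i |α_i - β_i| = 1`. -/
def metallicCube (a n : ℕ) : SimpleGraph (MetallicVertex a n) where
  Adj u v := (∑ i : Fin n, Nat.dist (u.1 i : ℕ) (v.1 i : ℕ)) = 1
  symm := by
    constructor
    intro u v h
    simpa [Nat.dist_comm] using h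
  loopless := by
    constructor
    intro u h
    simp [Nat.dist_self] at h

instance (a n : ℕ) : DecidableRel (metallicCube a n).Adj := fun u v =>
  inferInstanceAs (Decidable ((∑ i : Fin n, Nat.dist (u.1 i : ℕ) (v.1 i : ℕ)) = 1))

namespace MetallicAux


def step (a : ℕ) : Bool → List ℕ → Option (List ℕ)
  | _, [] => none
  | c, v :: rest =>
    let l : ℕ := if c then 1 else 0
    let t : ℕ := if rest.head? = some 0 then a else a - 1
    if v = t ∧ t % 2 = l then
      match rest with
      | [] => none
      | p :: rest' =>
        if v = a then (step a false rest').map (fun r => v :: p :: r)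
        else (step a true (p :: rest')).map (fun r => v :: r)
    else some ((if v % 2 = l then v + 1 else v - 1) :: rest)

def ValidR (a : ℕ) : List ℕ → Prop
  | [] => True
  | v :: rest => v ≤ a ∧ (v = a → rest.head? = some 0) ∧ ValidR a rest

lemma dist_sum_self : ∀ r : List ℕ, (List.zipWith Nat.dist r r).sum = 0
  | [] => rfl
  | v :: r => by simp [Nat.dist_self, dist_sum_self r]

lemma step_main (a : ℕ) (ha : 1 ≤ a) (r : List ℕ) (c : Bool) (r' : List ℕ)
    (hv : ValidR a r) (hc : c = true → r.head? ≠ some 0)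
    (h : step a c r = some r') :
    ValidR a r' ∧ (c = true → r'.head? ≠ some 0) ∧ r'.length = r.length ∧
      step a c r' = some r ∧ (List.zipWith Nat.dist r r').sum = 1 := by
  match r with
  | [] => simp [step] at h
  | v :: rest =>
    obtain ⟨hva, hv0, hvr⟩ := hv
    rw [step.eq_def] at h; simp only [] at h
    have hll : (if c then (1:ℕ) else 0) % 2 = (if c then (1:ℕ) else 0) := by
      split <;> rfl
    have hamt : a - 1 ≤ (if rest.head? = some 0 then a else a - 1) := by split <;> omega
    have hta : (if rest.head? = some 0 then a else a - 1) ≤ a := by split <;> omega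
    have hvt : v ≤ (if rest.head? = some 0 then a else a - 1) := by
      rcases Nat.lt_or_ge v a with h' | h'
      · omega
      · have hvA : v = a := by omega
        rw [if_pos (hv0 hvA)]; omega
    have hlv : (if c then (1:ℕ) else 0) ≤ v := by
      split
      · rename_i hcc
        have := hc hcc
        simp only [List.head?, ne_eq, Option.some.injEq] at this
        omega
      · omega
    by_cases hstuck : v = (if rest.head? = some 0 then a else a - 1) ∧
        (if rest.head? = some 0 then a else a - 1) % 2 = (if c then (1:ℕ) else 0)
    · rw [if_pos hstuck] at h
      match rest with
      | [] => simp at h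
      | p :: rest' =>
        simp only [] at h
        by_cases hvA : v = a
        · rw [if_pos hvA] at h
          obtain ⟨s', hs', rfl⟩ := Option.map_eq_some_iff.mp h
          have hp0 : p = 0 := by
            have := hv0 hvA; simpa using this
          obtain ⟨ih1, ih2, ih3, ih4, ih5⟩ :=
            step_main a ha rest' false s' hvr.2.2 (by simp) hs'
          subst hp0
          refine ⟨⟨hva, fun _ => rfl, by simp, by omega, ih1⟩,
            fun _ => by simp; omega, by simp [ih3], ?_, ?_⟩
          · rw [step.eq_def]; simp only []
            rw [if_pos (by simpa using hstuck), if_pos hvA, ih4]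
            rfl
          · simp [Nat.dist_self, ih5]
        · rw [if_neg hvA] at h
          obtain ⟨s', hs', rfl⟩ := Option.map_eq_some_iff.mp h
          have hph : (p :: rest').head? ≠ some 0 := by
            intro hh
            rw [if_pos hh] at hstuck
            exact hvA hstuck.1
          obtain ⟨ih1, ih2, ih3, ih4, ih5⟩ :=
            step_main a ha (p :: rest') true s' hvr (fun _ => hph) hs'
          have hs0 : s'.head? ≠ some 0 := ih2 rfl
          refine ⟨⟨hva, fun hh => absurd hh hvA, ih1⟩,
            fun hcc => hc hcc, by simp [ih3], ?_, ?_⟩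
          · rw [step.eq_def]; simp only []
            rw [if_neg hs0] at *
            rw [if_pos]
            · match s', ih3, ih4 with
              | q :: s'', _, ih4 =>
                simp only []
                rw [if_neg hvA, ih4]
                rfl
            · rw [if_neg hph] at hstuck
              exact hstuck
          · simp [Nat.dist_self, ih5]
    · rw [if_neg hstuck] at h
      rw [Option.some_inj] at h
      subst h
      by_cases hpar : v % 2 = (if c then (1:ℕ) else 0)
      · rw [if_pos hpar]
        have hvltt : v < (if rest.head? = some 0 then a else a - 1) := by
          rcases Nat.lt_or_ge v (if rest.head? = some 0 then a else a - 1) with h' | h'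
          · exact h'
          · exact absurd ⟨by omega, by omega⟩ hstuck
        refine ⟨⟨by omega, fun hh => ?_, hvr⟩, fun _ => by simp, rfl, ?_, ?_⟩
        · by_cases hhd : rest.head? = some 0
          · exact hhd
          · rw [if_neg hhd] at hvltt; omega
        · rw [step.eq_def]; simp only []
          rw [if_neg, if_neg (by omega : ¬ (v + 1) % 2 = (if c then (1:ℕ) else 0))]
          · norm_num
          · rintro ⟨h1, h2⟩
            omega
        · have hd : Nat.dist v (v + 1) = 1 := by simp [Nat.dist]
          simp [dist_sum_self, hd]
      · rw [if_neg hpar]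
        have hv1 : (if c then (1:ℕ) else 0) < v := by omega
        refine ⟨⟨by omega, by omega, hvr⟩, fun hcc => by simp [hcc] at hv1 ⊢; omega,
          rfl, ?_, ?_⟩
        · rw [step.eq_def]; simp only []
          rw [if_neg, if_pos (by omega : (v - 1) % 2 = (if c then (1:ℕ) else 0))]
          · rw [show v - 1 + 1 = v by omega]
          · rintro ⟨h1, h2⟩
            omega
        · have hd : Nat.dist v (v - 1) = 1 := by simp [Nat.dist]; omega
          simp [dist_sum_self, hd]

lemma step_none_unique (a : ℕ) (ha : 1 ≤ a) (r₁ r₂ : List ℕ) (c : Bool)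
    (hv₁ : ValidR a r₁) (hv₂ : ValidR a r₂)
    (hlen : r₁.length = r₂.length)
    (h₁ : step a c r₁ = none) (h₂ : step a c r₂ = none) : r₁ = r₂ := by
  match r₁, r₂ with
  | [], [] => rfl
  | [], _ :: _ => simp at hlen
  | _ :: _, [] => simp at hlen
  | v₁ :: rest₁, v₂ :: rest₂ =>
    obtain ⟨hva₁, hv0₁, hvr₁⟩ := hv₁
    obtain ⟨hva₂, hv0₂, hvr₂⟩ := hv₂
    rw [step.eq_def] at h₁ h₂; simp only [] at h₁ h₂
    -- both must be stuck
    have hs₁ : v₁ = (if rest₁.head? = some 0 then a else a - 1) ∧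
        (if rest₁.head? = some 0 then a else a - 1) % 2 = (if c then (1:ℕ) else 0) := by
      by_contra hcon
      rw [if_neg hcon] at h₁
      simp at h₁
    have hs₂ : v₂ = (if rest₂.head? = some 0 then a else a - 1) ∧
        (if rest₂.head? = some 0 then a else a - 1) % 2 = (if c then (1:ℕ) else 0) := by
      by_contra hcon
      rw [if_neg hcon] at h₂
      simp at h₂
    rw [if_pos hs₁] at h₁
    rw [if_pos hs₂] at h₂
    -- the two tops have equal parity, hence are equal
    have htt : (if rest₁.head? = some 0 then a else a - 1) =
        (if rest₂.head? = some 0 then a else a - 1) := by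
      have p₁ := hs₁.2; have p₂ := hs₂.2
      have ho₁ : (if rest₁.head? = some 0 then a else a - 1) = a ∨
          (if rest₁.head? = some 0 then a else a - 1) = a - 1 := by split <;> simp
      have ho₂ : (if rest₂.head? = some 0 then a else a - 1) = a ∨
          (if rest₂.head? = some 0 then a else a - 1) = a - 1 := by split <;> simp
      omega
    have hvv : v₁ = v₂ := by rw [hs₁.1, hs₂.1, htt]
    subst hvv
    match rest₁, rest₂ with
    | [], [] => rfl
    | [], _ :: _ => simp at hlen
    | _ :: _, [] => simp at hlen
    | p₁ :: rest₁', p₂ :: rest₂' =>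
      simp only [] at h₁ h₂
      by_cases hvA : v₁ = a
      · rw [if_pos hvA] at h₁ h₂
        rw [Option.map_eq_none_iff] at h₁ h₂
        have hp₁ : p₁ = 0 := by have := hv0₁ hvA; simpa using this
        have hp₂ : p₂ = 0 := by have := hv0₂ hvA; simpa using this
        have := step_none_unique a ha rest₁' rest₂' false hvr₁.2.2 hvr₂.2.2
          (by simpa using hlen) h₁ h₂
        rw [hp₁, hp₂, this]
      · rw [if_neg hvA] at h₁ h₂
        rw [Option.map_eq_none_iff] at h₁ h₂
        have := step_none_unique a ha (p₁ :: rest₁') (p₂ :: rest₂') true hvr₁ hvr₂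
          (by simpa using hlen) h₁ h₂
        rw [this]

/-! ### Glue with the metallic cube -/

lemma validR_iff (a : ℕ) (r : List ℕ) :
    ValidR a r ↔ ∀ k x, r[k]? = some x → x ≤ a ∧ (x = a → r[k + 1]? = some 0) := by
  induction r with
  | nil => simp [ValidR]
  | cons v rest ih =>
    have hhead : ∀ (h : rest.head? = some 0), rest[0]? = some 0 := by
      intro h
      match rest, h with
      | w :: rest', hw => simpa using hw
    have hhead' : ∀ (h : rest[0]? = some 0), rest.head? = some 0 := by
      intro h
      match rest, h with
      | w :: rest', hw => simpa using hw
    constructor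
    · rintro ⟨h1, h2, h3⟩ k x hk
      match k with
      | 0 =>
        simp only [List.getElem?_cons_zero, Option.some.injEq] at hk
        subst hk
        exact ⟨h1, fun hx => by simpa using hhead (h2 hx)⟩
      | k + 1 =>
        simp only [List.getElem?_cons_succ] at hk ⊢
        exact (ih.mp h3) k x hk
    · intro h
      refine ⟨(h 0 v (by simp)).1, fun hv => ?_, ih.mpr fun k x hk => ?_⟩
      · exact hhead' (by simpa using (h 0 v (by simp)).2 hv)
      · have h2 := h (k + 1) x (by simpa using hk)
        simpa using h2

lemma reva_get (a n : ℕ) (v : Fin n → Fin (a + 1)) (k : ℕ) (hk : k < n) :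
    ((List.ofFn fun i => (v i : ℕ)).reverse)[k]? =
      some (v ⟨n - 1 - k, by omega⟩ : ℕ) := by
  rw [List.getElem?_reverse (by simpa using hk), List.getElem?_ofFn]
  simp only [List.length_ofFn]
  rw [dif_pos (by omega : n - 1 - k < n)]

lemma metallicOK_iff (a n : ℕ) (v : Fin n → Fin (a + 1)) :
    MetallicOK a n v ↔ ValidR a ((List.ofFn fun i => (v i : ℕ)).reverse) := by
  have hlen : ((List.ofFn fun i => (v i : ℕ)).reverse).length = n := by simp
  rw [validR_iff]
  constructor
  · intro hok k x hk
    by_cases hkn : k < n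
    · rw [reva_get a n v k hkn] at hk
      obtain rfl : ((v ⟨n - 1 - k, by omega⟩ : Fin (a + 1)) : ℕ) = x := by
        simpa using hk
      refine ⟨Nat.lt_succ_iff.mp (Fin.is_lt _), fun hx => ?_⟩
      obtain ⟨j, hj1, hj2⟩ := hok _ hx
      have hj1' : (j : ℕ) + 1 = n - 1 - k := by simpa using hj1
      have hjlt : (j : ℕ) < n := j.isLt
      have hk1 : k + 1 < n := by omega
      rw [reva_get a n v (k + 1) hk1]
      have hje : (⟨n - 1 - (k + 1), by omega⟩ : Fin n) = j := Fin.ext (by simp; omega)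
      rw [hje, hj2]
    · rw [List.getElem?_eq_none (by rw [hlen]; omega)] at hk
      simp at hk
  · intro h i hi
    have hilt : (i : ℕ) < n := i.isLt
    have hki : n - 1 - (i : ℕ) < n := by omega
    have hie : (⟨n - 1 - (n - 1 - (i : ℕ)), by omega⟩ : Fin n) = i :=
      Fin.ext (by simp; omega)
    have h2 := (h (n - 1 - (i : ℕ)) ((v i : ℕ))
      (by rw [reva_get a n v _ hki, hie])).2 hi
    have hk1 : n - 1 - (i : ℕ) + 1 < n := by
      by_contra hcon
      rw [List.getElem?_eq_none (by rw [hlen]; omega)] at h2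
      simp at h2
    rw [reva_get a n v _ hk1] at h2
    refine ⟨⟨n - 1 - (n - 1 - (i : ℕ) + 1), by omega⟩, by simp; omega, by simpa using h2⟩

/-- Reconstruct the letter function from a (reversed) list. -/
def mkFun (n : ℕ) (r : List ℕ) : Fin n → ℕ := fun i => r.getD (n - 1 - (i : ℕ)) 0

lemma ofFn_mkFun (n : ℕ) (r : List ℕ) (hlen : r.length = n) :
    (List.ofFn (mkFun n r)).reverse = r := by
  apply List.ext_getElem?
  intro k
  by_cases hk : k < n
  · have h1 : ((List.ofFn (mkFun n r)).reverse)[k]? = some (mkFun n r ⟨n - 1 - k, by omega⟩) := by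
      rw [List.getElem?_reverse (by simpa using hk), List.getElem?_ofFn]
      simp only [List.length_ofFn]
      rw [dif_pos (by omega : n - 1 - k < n)]
    rw [h1]
    unfold mkFun
    simp only []
    rw [List.getD_eq_getElem?_getD]
    rw [List.getElem?_eq_getElem (by omega)]
    have : n - 1 - (n - 1 - k) = k := by omega
    simp [this]
  · rw [List.getElem?_eq_none (by simpa using (by omega : n ≤ k)),
      List.getElem?_eq_none (by omega)]

lemma validR_le (a : ℕ) (r : List ℕ) (hr : ValidR a r) (k : ℕ) (hk : k < r.length) :
    r[k] ≤ a := by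
  have := ((validR_iff a r).mp hr) k r[k] (List.getElem?_eq_getElem hk)
  exact this.1

variable {a n : ℕ}

lemma mkFun_le (r : List ℕ) (hr : ValidR a r) (hlen : r.length = n) (i : Fin n) :
    mkFun n r i ≤ a := by
  unfold mkFun
  rw [List.getD_eq_getElem?_getD, List.getElem?_eq_getElem (by omega)]
  exact validR_le a r hr _ _

/-- Reconstruct a vertex from a valid (reversed) list. -/
def mkVert (r : List ℕ) (hr : ValidR a r) (hlen : r.length = n) : MetallicVertex a n :=
  ⟨fun i => ⟨mkFun n r i, Nat.lt_succ_of_le (mkFun_le r hr hlen i)⟩, by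
    rw [metallicOK_iff]
    have : (fun i => ((⟨mkFun n r i, Nat.lt_succ_of_le (mkFun_le r hr hlen i)⟩ :
        Fin (a + 1)) : ℕ)) = mkFun n r := rfl
    rw [this, ofFn_mkFun n r hlen]
    exact hr⟩

/-- The reversed list of letters of a vertex. -/
def L (α : MetallicVertex a n) : List ℕ := (List.ofFn fun i => (α.1 i : ℕ)).reverse

lemma L_length (α : MetallicVertex a n) : (L α).length = n := by simp [L]

lemma L_valid (α : MetallicVertex a n) : ValidR a (L α) :=
  (metallicOK_iff a n α.1).mp α.2

lemma L_mkVert (r : List ℕ) (hr : ValidR a r) (hlen : r.length = n) :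
    L (mkVert r hr hlen) = r := by
  unfold L mkVert
  exact ofFn_mkFun n r hlen

lemma L_inj (α β : MetallicVertex a n) (h : L α = L β) : α = β := by
  unfold L at h
  rw [List.reverse_inj] at h
  have := List.ofFn_injective h
  apply Subtype.ext
  funext i
  exact Fin.val_injective (congrFun this i)

lemma mkVert_L (α : MetallicVertex a n) (hr : ValidR a (L α)) (hlen : (L α).length = n) :
    mkVert (L α) hr hlen = α :=
  L_inj _ _ (L_mkVert _ hr hlen)

/-- The matching involution on vertices. -/
def fV (ha : 1 ≤ a) (α : MetallicVertex a n) : MetallicVertex a n :=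
  match h : step a false (L α) with
  | none => α
  | some r' =>
      mkVert r'
        (step_main a ha (L α) false r' (L_valid α) (by simp) h).1
        (by rw [(step_main a ha (L α) false r' (L_valid α) (by simp) h).2.2.1,
              L_length])

lemma fV_none (ha : 1 ≤ a) (α : MetallicVertex a n)
    (h : step a false (L α) = none) : fV ha α = α := by
  unfold fV
  split
  · rfl
  · rename_i r' h'
    rw [h] at h'
    cases h'

lemma fV_some (ha : 1 ≤ a) (α : MetallicVertex a n) (r' : List ℕ)
    (h : step a false (L α) = some r') (hr : ValidR a r') (hlen : r'.length = n) :
    fV ha α = mkVert r' hr hlen := by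
  unfold fV
  split
  · rename_i h'
    rw [h] at h'
    cases h'
  · rename_i s' h'
    rw [h] at h'
    cases h'
    rfl

lemma L_fV (ha : 1 ≤ a) (α : MetallicVertex a n) (r' : List ℕ)
    (h : step a false (L α) = some r') : L (fV ha α) = r' := by
  obtain ⟨h1, _, h3, _, _⟩ := step_main a ha (L α) false r' (L_valid α) (by simp) h
  rw [fV_some ha α r' h h1 (by rw [h3, L_length]), L_mkVert]

lemma fV_invol (ha : 1 ≤ a) (α : MetallicVertex a n) : fV ha (fV ha α) = α := by
  cases h : step a false (L α) with
  | none => rw [fV_none ha α h, fV_none ha α h]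
  | some r' =>
    obtain ⟨h1, _, h3, h4, _⟩ := step_main a ha (L α) false r' (L_valid α) (by simp) h
    have hL := L_fV ha α r' h
    have hstep : step a false (L (fV ha α)) = some (L α) := by rw [hL]; exact h4
    rw [fV_some ha (fV ha α) (L α) hstep (L_valid α) (L_length α)]
    exact mkVert_L α _ _

lemma fV_fixed_iff (ha : 1 ≤ a) (α : MetallicVertex a n) :
    fV ha α = α ↔ step a false (L α) = none := by
  constructor
  · intro hfix
    cases h : step a false (L α) with
    | none => rfl
    | some r' =>
      obtain ⟨h1, _, h3, _, h5⟩ := step_main a ha (L α) false r' (L_valid α) (by simp) h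
      have hL : r' = L α := by rw [← L_fV ha α r' h, hfix]
      rw [hL, dist_sum_self] at h5
      cases h5
  · exact fV_none ha α

/-- Distance sums transfer between vertices and reversed lists. -/
lemma dist_sum_rev : ∀ (x y : List ℕ), x.length = y.length →
    (List.zipWith Nat.dist x.reverse y.reverse).sum = (List.zipWith Nat.dist x y).sum
  | [], [], _ => rfl
  | [], _ :: _, h => by simp at h
  | _ :: _, [], h => by simp at h
  | v :: x, w :: y, h => by
    have hxy : x.length = y.length := by simpa using h
    simp only [List.reverse_cons]
    rw [List.zipWith_append (by simpa using hxy)]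
    rw [List.sum_append, dist_sum_rev x y hxy]
    simp [Nat.add_comm]

lemma dist_sum_ofFn (u v : Fin n → ℕ) :
    (List.zipWith Nat.dist (List.ofFn u) (List.ofFn v)).sum = ∑ i, Nat.dist (u i) (v i) := by
  induction n with
  | zero => simp
  | succ m ih =>
    rw [List.ofFn_succ, List.ofFn_succ]
    simp only [List.zipWith_cons_cons, List.sum_cons]
    rw [ih]
    rw [Fin.sum_univ_succ]

lemma fV_adj (ha : 1 ≤ a) (α : MetallicVertex a n) (hne : fV ha α ≠ α) :
    (∑ i : Fin n, Nat.dist (α.1 i : ℕ) ((fV ha α).1 i : ℕ)) = 1 := by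
  cases h : step a false (L α) with
  | none => exact absurd (fV_none ha α h) hne
  | some r' =>
    obtain ⟨_, _, h3, _, h5⟩ := step_main a ha (L α) false r' (L_valid α) (by simp) h
    have hL := L_fV ha α r' h
    rw [← dist_sum_ofFn]
    have := dist_sum_rev (List.ofFn fun i => (α.1 i : ℕ))
      (List.ofFn fun i => ((fV ha α).1 i : ℕ)) (by simp)
    rw [← this]
    show (List.zipWith Nat.dist (L α) (L (fV ha α))).sum = 1
    rw [hL]
    exact h5

lemma fV_fixed_unique (ha : 1 ≤ a) (α β : MetallicVertex a n)
    (hα : fV ha α = α) (hβ : fV ha β = β) : α = β := by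
  rw [fV_fixed_iff] at hα hβ
  exact L_inj _ _ (step_none_unique a ha (L α) (L β) false (L_valid α) (L_valid β)
    (by rw [L_length, L_length]) hα hβ)

/-! ### Parity of an involution's support -/

lemma even_card_support {V : Type*} [Fintype V] [DecidableEq V] (g : V → V)
    (hg : ∀ v, g (g v) = v) :
    Even (Finset.univ.filter fun v => g v ≠ v).card := by
  classical
  suffices h : ∀ s : Finset V, (∀ v ∈ s, g v ∈ s ∧ g v ≠ v) → Even s.card by
    refine h _ fun v hv => ?_
    simp only [Finset.mem_filter, Finset.mem_univ, true_and] at hv ⊢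
    exact ⟨by rw [hg]; exact fun hh => hv hh.symm, hv⟩
  intro s
  induction s using Finset.strongInduction with
  | _ s ih =>
    intro hs
    rcases s.eq_empty_or_nonempty with rfl | ⟨x, hx⟩
    · simp
    · obtain ⟨hgx, hne⟩ := hs x hx
      have hsub : ({x, g x} : Finset V) ⊆ s := by
        intro y hy
        simp only [Finset.mem_insert, Finset.mem_singleton] at hy
        rcases hy with rfl | rfl <;> assumption
      have hss : s \ {x, g x} ⊂ s :=
        Finset.sdiff_ssubset hsub ⟨x, by simp⟩
      have he : Even (s \ {x, g x}).card := by
        refine ih _ hss fun v hv => ?_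
        simp only [Finset.mem_sdiff, Finset.mem_insert, Finset.mem_singleton,
          not_or] at hv ⊢
        obtain ⟨hvs, hvx, hvgx⟩ := hv
        obtain ⟨h1, h2⟩ := hs v hvs
        refine ⟨⟨h1, fun hh => hvgx (by rw [← hh, hg]), fun hh => hvx (by rw [← hg v, hh, hg])⟩, h2⟩
      have hc2 : ({x, g x} : Finset V).card = 2 := Finset.card_pair (fun hh => hne hh.symm)
      have hcs : (s \ {x, g x}).card = s.card - 2 := by rw [Finset.card_sdiff_of_subset hsub, hc2]
      have hle : 2 ≤ s.card := by
        calc 2 = ({x, g x} : Finset V).card := hc2.symm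
        _ ≤ s.card := Finset.card_le_card hsub
      obtain ⟨k, hk⟩ := he
      exact ⟨k + 1, by omega⟩

end MetallicAux

/-- `Π^a_n` admits a perfect matching when its number of vertices is
even, and a matching covering all but exactly one vertex when it is odd. -/
theorem metallic_matching (a n : ℕ) (ha : 1 ≤ a) (hn : 1 ≤ n) :
    (Even (Fintype.card (MetallicVertex a n)) →
      ∃ M : (metallicCube a n).Subgraph, M.IsPerfectMatching) ∧
    (¬ Even (Fintype.card (MetallicVertex a n)) →
      ∃ (M : (metallicCube a n).Subgraph) (v : MetallicVertex a n),
        M.IsMatching ∧ M.verts = {v}ᶜ) := by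
  classical
  set g : MetallicVertex a n → MetallicVertex a n := MetallicAux.fV ha with hg
  have hinv : ∀ v, g (g v) = v := fun v => MetallicAux.fV_invol ha v
  have hadj : ∀ v, g v ≠ v → (metallicCube a n).Adj v (g v) := by
    intro v hv
    show (∑ i : Fin n, Nat.dist (v.1 i : ℕ) ((g v).1 i : ℕ)) = 1
    exact MetallicAux.fV_adj ha v hv
  have huniq : ∀ v w, g v = v → g w = w → v = w := fun v w hv hw =>
    MetallicAux.fV_fixed_unique ha v w hv hw
  -- the matching subgraph
  set M : (metallicCube a n).Subgraph :=
    { verts := {v | g v ≠ v}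
      Adj := fun u v => g u = v ∧ u ≠ v
      adj_sub := by
        rintro u v ⟨h1, h2⟩
        subst h1
        exact hadj u (fun hh => h2 hh.symm)
      edge_vert := by
        rintro u v ⟨h1, h2⟩
        subst h1
        exact fun hh => h2 hh.symm
      symm := by
        constructor
        rintro u v ⟨h1, h2⟩
        subst h1
        exact ⟨hinv u, fun hh => h2 hh.symm⟩ } with hM
  have hMatch : M.IsMatching := by
    intro v hv
    refine ⟨g v, ⟨rfl, fun hh => hv hh.symm⟩, ?_⟩
    rintro w ⟨hw1, hw2⟩
    exact hw1.symm
  -- counting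
  set s : Finset (MetallicVertex a n) := Finset.univ.filter (fun v => g v = v) with hs
  have hsplit : s.card + (Finset.univ.filter fun v => g v ≠ v).card =
      Fintype.card (MetallicVertex a n) :=
    Finset.card_filter_add_card_filter_not _
  have heven : Even (Finset.univ.filter fun v => g v ≠ v).card :=
    MetallicAux.even_card_support g hinv
  have hs1 : s.card ≤ 1 := Finset.card_le_one.mpr (by
    intro u hu w hw
    simp only [hs, Finset.mem_filter] at hu hw
    exact huniq u w hu.2 hw.2)
  constructor
  · intro hE
    have hs0 : s.card = 0 := by
      obtain ⟨k1, hk1⟩ := hE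
      obtain ⟨k2, hk2⟩ := heven
      omega
    have hnofix : ∀ v, g v ≠ v := by
      intro v hv
      have : v ∈ s := by simp [hs, hv]
      rw [Finset.card_eq_zero] at hs0
      rw [hs0] at this
      simp at this
    exact ⟨M, hMatch, fun v => hnofix v⟩
  · intro hO
    have hs1' : s.card = 1 := by
      obtain ⟨k2, hk2⟩ := heven
      rcases Nat.lt_or_ge s.card 1 with h' | h'
      · exfalso; apply hO; exact ⟨k2, by omega⟩
      · omega
    obtain ⟨v0, hv0⟩ := Finset.card_eq_one.mp hs1'
    refine ⟨M, v0, hMatch, ?_⟩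
    ext v
    simp only [Set.mem_compl_iff, Set.mem_singleton_iff]
    show g v ≠ v ↔ ¬ v = v0
    constructor
    · intro hv hveq
      subst hveq
      have : v ∈ s := by
        rw [hv0]; simp
      simp only [hs, Finset.mem_filter] at this
      exact hv this.2
    · intro hv hfix
      apply hv
      have : v ∈ s := by simp [hs, hfix]
      rw [hv0] at this
      simpa using this
end

section
/- For every even integer a ≥ 2 and every odd integer n ≥ 3, the metallic cube Π^a_n is Hamiltonian, i.e., it contains a cycle visiting every vertex exactly once. -/
namespace Metallic

open List

/-! ### distance-1 relation on strings -/

def dist1 (u v : List ℕ) : Prop := (List.zipWith Nat.dist u v).sum = 1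

lemma zipWith_dist_self (u : List ℕ) : (List.zipWith Nat.dist u u).sum = 0 := by
  induction u with
  | nil => simp
  | cons c w ih => simp [Nat.dist_self, ih]

lemma dist1_symm {u v : List ℕ} (h : dist1 u v) : dist1 v u := by
  unfold dist1 at *
  rwa [List.zipWith_comm_of_comm (fun x y => Nat.dist_comm x y)]

lemma dist1_cons_same {u v : List ℕ} (c : ℕ) (h : dist1 u v) : dist1 (c :: u) (c :: v) := by
  simp [dist1] at *; simpa [Nat.dist_self] using h

lemma dist1_cons_diff {b c : ℕ} (w : List ℕ) (h : Nat.dist b c = 1) :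
    dist1 (b :: w) (c :: w) := by
  simp [dist1, h, zipWith_dist_self w]

lemma dist_succ_self (b : ℕ) : Nat.dist (b+1) b = 1 := by simp [Nat.dist]

lemma dist_self_succ (b : ℕ) : Nat.dist b (b+1) = 1 := by simp [Nat.dist]

lemma dist_pred {a : ℕ} (ha : 1 ≤ a) : Nat.dist (a-1) a = 1 := by
  simp [Nat.dist]; omega

lemma dist_pred' {a : ℕ} (ha : 1 ≤ a) : Nat.dist a (a-1) = 1 := by
  simp [Nat.dist]; omega

lemma exists_head? {α : Type*} {l : List α} (h : l ≠ []) : ∃ x, l.head? = some x := by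
  cases l with
  | nil => exact absurd rfl h
  | cons x t => exact ⟨x, rfl⟩

lemma exists_getLast? {α : Type*} {l : List α} (h : l ≠ []) : ∃ x, l.getLast? = some x := by
  cases l with
  | nil => exact absurd rfl h
  | cons x t => exact ⟨(x :: t).getLast (by simp), List.getLast?_eq_getLast _⟩

variable (a : ℕ)

/-! ### validity of strings -/

/-- validity of a string; the flag says whether the letter `a` is allowed
in the first position (true in the "link" graph `Λ`, false in `Π`). -/
def ok : Bool → List ℕ → Prop
  | _, [] => True
  | f, c :: w => (if f then c ≤ a else c < a) ∧ ok (c == 0) w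

lemma ok_nil (f : Bool) : ok a f [] := trivial

lemma ok_cons {f : Bool} {c : ℕ} {w : List ℕ} :
    ok a f (c :: w) ↔ (if f then c ≤ a else c < a) ∧ ok a (c == 0) w := Iff.rfl

lemma ok_le {f : Bool} : ∀ {w : List ℕ}, ok a f w → ∀ c ∈ w, c ≤ a := by
  intro w
  induction w generalizing f with
  | nil => intro _ c hc; simp at hc
  | cons d u ih =>
    intro h c hc
    rcases h with ⟨h1, h2⟩
    rcases List.mem_cons.1 hc with rfl | hc
    · cases f <;> simp at h1 <;> omega
    · exact ih h2 c hc

/-! ### columns -/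

/-- the copy of content `L` with first letter `b`; traversed forward iff `b` is odd. -/
def col (b : ℕ) (L : List (List ℕ)) : List (List ℕ) :=
  (if b % 2 = 1 then L else L.reverse).map (b :: ·)

lemma mem_col {b : ℕ} {L : List (List ℕ)} {w : List ℕ} :
    w ∈ col b L ↔ ∃ u ∈ L, w = b :: u := by
  unfold col
  split <;> simp [eq_comm]

lemma col_ne_nil {b : ℕ} {L : List (List ℕ)} (h : L ≠ []) : col b L ≠ [] := by
  unfold col
  split <;> simp [h]

lemma col_head? (b : ℕ) (L : List (List ℕ)) :
    (col b L).head? = (b :: ·) <$> (if b % 2 = 1 then L.head? else L.getLast?) := by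
  unfold col
  split <;> simp [List.head?_map, List.head?_reverse]

lemma col_getLast? (b : ℕ) (L : List (List ℕ)) :
    (col b L).getLast? = (b :: ·) <$> (if b % 2 = 1 then L.getLast? else L.head?) := by
  unfold col
  split <;> simp [List.getLast?_map, List.getLast?_reverse]

lemma col_chain {b : ℕ} {L : List (List ℕ)} (h : List.IsChain dist1 L) :
    List.IsChain dist1 (col b L) := by
  unfold col
  split
  · exact (List.isChain_map _).2 (h.imp fun _ _ hd => dist1_cons_same b hd)
  · refine (List.isChain_map _).2 ?_
    refine List.isChain_reverse.2 ?_
    exact h.imp fun u v hd => dist1_cons_same b (dist1_symm hd)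

lemma col_nodup {b : ℕ} {L : List (List ℕ)} (h : L.Nodup) : (col b L).Nodup := by
  unfold col
  have : ∀ (M : List (List ℕ)), M.Nodup → (M.map (b :: ·)).Nodup := by
    intro M hM
    exact hM.map (fun u v huv => by simpa using huv)
  split
  · exact this _ h
  · exact this _ (List.nodup_reverse.2 h)

lemma col_length (b : ℕ) (L : List (List ℕ)) : (col b L).length = L.length := by
  unfold col; split <;> simp

/-! ### the snake -/

/-- the snake through copies `k, k-1, …, 1` (content `P`) and `0` (content `L`). -/
def snk (P L : List (List ℕ)) : ℕ → List (List ℕ)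
  | 0 => col 0 L
  | b+1 => col (b+1) P ++ snk P L b

lemma snk_ne_nil {P L : List (List ℕ)} (hL : L ≠ []) (k : ℕ) : snk P L k ≠ [] := by
  cases k with
  | zero => exact col_ne_nil hL
  | succ b => simp only [snk]; intro h; rcases List.append_eq_nil_iff.1 h with ⟨-, h2⟩
              exact snk_ne_nil hL b h2

lemma snk_head? {P L : List (List ℕ)} (hP : P ≠ []) (hlast : L.getLast? = P.getLast?) (k : ℕ) :
    (snk P L k).head? = (k :: ·) <$> (if k % 2 = 1 then P.head? else P.getLast?) := by
  cases k with
  | zero => simpa [snk, col_head?] using by rw [hlast]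
  | succ b =>
    simp only [snk]
    rw [List.head?_append_of_ne_nil _ (col_ne_nil hP), col_head?]

lemma snk_getLast? (P L : List (List ℕ)) (hL : L ≠ []) (k : ℕ) :
    (snk P L k).getLast? = ((0 : ℕ) :: ·) <$> L.head? := by
  induction k with
  | zero => simp [snk, col_getLast?]
  | succ b ih =>
    simp only [snk]
    rw [List.getLast?_append_of_ne_nil _ (snk_ne_nil hL b), ih]

lemma snk_chain {P L : List (List ℕ)} (hcP : List.IsChain dist1 P)
    (hcL : List.IsChain dist1 L) (hP : P ≠ []) (hL : L ≠ [])
    (hlast : L.getLast? = P.getLast?) (k : ℕ) :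
    List.IsChain dist1 (snk P L k) := by
  induction k with
  | zero => exact col_chain hcL
  | succ b ih =>
    refine List.isChain_append.2 ⟨col_chain hcP, ih, ?_⟩
    intro x hx y hy
    rw [col_getLast?] at hx
    rw [snk_head? hP hlast] at hy
    rcases exists_head? hP with ⟨hp, hhp⟩
    rcases exists_getLast? hP with ⟨lp, hlp⟩
    by_cases hb : b % 2 = 1
    · rw [if_neg (show ¬((b+1) % 2 = 1) by omega)] at hx
      rw [if_pos hb] at hy
      rw [hhp] at hx hy
      simp at hx hy
      subst hx; subst hy
      exact dist1_cons_diff _ (dist_succ_self b)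
    · rw [if_pos (show (b+1) % 2 = 1 by omega)] at hx
      rw [if_neg hb] at hy
      rw [hlp] at hx hy
      simp at hx hy
      subst hx; subst hy
      exact dist1_cons_diff _ (dist_succ_self b)

lemma mem_snk {P L : List (List ℕ)} {k : ℕ} {w : List ℕ} :
    w ∈ snk P L k ↔ ∃ b u, b ≤ k ∧ w = b :: u ∧ u ∈ (if b = 0 then L else P) := by
  induction k with
  | zero =>
    rw [snk, mem_col]
    constructor
    · rintro ⟨u, hu, rfl⟩; exact ⟨0, u, le_refl 0, rfl, by simpa using hu⟩
    · rintro ⟨b, u, hb, rfl, hu⟩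
      interval_cases b
      exact ⟨u, by simpa using hu, rfl⟩
  | succ j ih =>
    rw [snk, List.mem_append, mem_col, ih]
    constructor
    · rintro (⟨u, hu, rfl⟩ | ⟨b, u, hb, rfl, hu⟩)
      · exact ⟨j+1, u, le_refl _, rfl, by simp [hu]⟩
      · exact ⟨b, u, by omega, rfl, hu⟩
    · rintro ⟨b, u, hb, rfl, hu⟩
      rcases Nat.lt_or_ge b (j+1) with h | h
      · exact Or.inr ⟨b, u, by omega, rfl, hu⟩
      · have : b = j + 1 := by omega
        subst this
        exact Or.inl ⟨u, by simpa [Nat.succ_ne_zero] using hu, rfl⟩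

lemma snk_nodup {P L : List (List ℕ)} (hP : P.Nodup) (hL : L.Nodup) (k : ℕ) :
    (snk P L k).Nodup := by
  induction k with
  | zero => exact col_nodup hL
  | succ b ih =>
    refine (col_nodup hP).append ih ?_
    intro x hx hx'
    rcases mem_col.1 hx with ⟨u, hu, rfl⟩
    rcases mem_snk.1 hx' with ⟨b', u', hb', heq, hu'⟩
    have : b + 1 = b' := by exact (List.cons_eq_cons.1 heq).1
    omega

lemma snk_length (P L : List (List ℕ)) (k : ℕ) :
    (snk P L k).length = k * P.length + L.length := by
  induction k with
  | zero => simp [snk, col_length]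
  | succ b ih => simp [snk, col_length, ih]; ring

/-! ### the zigzag over the top two copies -/

/-- zigzag traversal of the copies with first letters `a` and `a-1`. -/
def zig : List (List ℕ) → List (List ℕ)
  | [] => []
  | [u] => [(a-1) :: u, a :: u]
  | u :: v :: rest => [(a-1) :: u, a :: u, a :: v, (a-1) :: v] ++ zig rest

lemma zig_ne_nil {L : List (List ℕ)} (h : L ≠ []) : zig a L ≠ [] := by
  match L with
  | [] => exact absurd rfl h
  | [u] => simp [zig]
  | u :: v :: rest => simp [zig]

lemma zig_head? (L : List (List ℕ)) :
    (zig a L).head? = ((a-1) :: ·) <$> L.head? := by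
  match L with
  | [] => simp [zig]
  | [u] => simp [zig]
  | u :: v :: rest => simp [zig]

lemma zig_length (L : List (List ℕ)) : (zig a L).length = 2 * L.length := by
  match L with
  | [] => simp [zig]
  | [u] => simp [zig]
  | u :: v :: rest =>
    have := zig_length rest
    simp [zig, this]; ring

lemma zig_getLast? {L : List (List ℕ)} (hL : L ≠ []) (he : Even L.length) :
    (zig a L).getLast? = ((a-1) :: ·) <$> L.getLast? := by
  match L with
  | [] => exact absurd rfl hL
  | [u] => exfalso; simp at he
  | [u, v] => simp [zig]
  | u :: v :: w :: rest =>
    have hne : (w :: rest) ≠ [] := by simp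
    have he' : Even (w :: rest).length := by
      rcases he with ⟨t, ht⟩
      simp only [List.length_cons] at ht ⊢
      exact ⟨t - 1, by omega⟩
    have ih := zig_getLast? hne he'
    show ([(a-1) :: u, a :: u, a :: v, (a-1) :: v] ++ zig a (w :: rest)).getLast? = _
    rw [List.getLast?_append_of_ne_nil _ (zig_ne_nil a hne), ih]
    simp

lemma of_mem_zig {L : List (List ℕ)} {w : List ℕ} (h : w ∈ zig a L) :
    ∃ u ∈ L, w = a :: u ∨ w = (a-1) :: u := by
  match L with
  | [] => simp [zig] at h
  | [u] =>
    simp [zig] at h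
    rcases h with rfl | rfl
    · exact ⟨u, by simp, Or.inr rfl⟩
    · exact ⟨u, by simp, Or.inl rfl⟩
  | u :: v :: rest =>
    simp only [zig, List.cons_append, List.nil_append, List.mem_cons] at h
    rcases h with rfl | rfl | rfl | rfl | h
    · exact ⟨u, by simp, Or.inr rfl⟩
    · exact ⟨u, by simp, Or.inl rfl⟩
    · exact ⟨v, by simp, Or.inl rfl⟩
    · exact ⟨v, by simp, Or.inr rfl⟩
    · rcases of_mem_zig h with ⟨u', hu', hw⟩
      exact ⟨u', by simp [hu'], hw⟩

lemma mem_zig_of {L : List (List ℕ)} {u : List ℕ} (hu : u ∈ L) :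
    a :: u ∈ zig a L ∧ (a-1) :: u ∈ zig a L := by
  match L with
  | [] => simp at hu
  | [v] =>
    simp at hu; subst hu; simp [zig]
  | v :: v' :: rest =>
    simp only [List.mem_cons] at hu
    simp only [zig, List.cons_append, List.nil_append, List.mem_cons]
    rcases hu with rfl | rfl | hu
    · exact ⟨by tauto, by tauto⟩
    · exact ⟨by tauto, by tauto⟩
    · rcases mem_zig_of hu with ⟨h1, h2⟩
      exact ⟨by tauto, by tauto⟩

lemma zig_chain {L : List (List ℕ)} (ha : 1 ≤ a) (h : List.IsChain dist1 L) :
    List.IsChain dist1 (zig a L) := by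
  match L with
  | [] => simp [zig]
  | [u] =>
    simp only [zig]
    exact List.isChain_pair.2 (dist1_cons_diff _ (dist_pred ha))
  | u :: v :: rest =>
    have h1 : dist1 u v := (List.isChain_cons_cons.1 h).1
    have h2 : List.IsChain dist1 (v :: rest) := (List.isChain_cons_cons.1 h).2
    have h3 : List.IsChain dist1 rest := h2.tail
    show List.IsChain dist1 ([(a-1) :: u, a :: u, a :: v, (a-1) :: v] ++ zig a rest)
    refine List.isChain_append.2 ⟨?_, zig_chain ha h3, ?_⟩
    · refine List.isChain_cons_cons.2 ⟨dist1_cons_diff _ (dist_pred ha), ?_⟩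
      refine List.isChain_cons_cons.2 ⟨dist1_cons_same _ h1, ?_⟩
      refine List.isChain_cons_cons.2 ⟨dist1_cons_diff _ (dist_pred' ha), ?_⟩
      simp
    · intro x hx y hy
      simp only [List.getLast?_cons_cons, List.getLast?_singleton, Option.mem_def,
        Option.some.injEq] at hx
      subst hx
      rw [zig_head? a rest] at hy
      match rest, hy with
      | r :: rest', hy =>
        simp at hy
        subst hy
        exact dist1_cons_same _ ((List.isChain_cons_cons.1 h2).1)

lemma zig_nodup {L : List (List ℕ)} (ha : 1 ≤ a) (h : L.Nodup) : (zig a L).Nodup := by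
  have hne : a - 1 ≠ a := by omega
  match L with
  | [] => simp [zig]
  | [u] => simp [zig, hne]
  | u :: v :: rest =>
    have huv : u ≠ v := by simp at h; tauto
    have hu : u ∉ rest := by simp at h; tauto
    have hv : v ∉ rest := by simp at h; tauto
    have h3 : rest.Nodup := by simp at h; tauto
    show ([(a-1) :: u, a :: u, a :: v, (a-1) :: v] ++ zig a rest).Nodup
    refine List.Nodup.append ?_ (zig_nodup ha h3) ?_
    · simp [huv, hne]
      omega
    · intro x hx hx'
      rcases of_mem_zig a hx' with ⟨u', hu', hw⟩
      simp only [List.mem_cons, List.not_mem_nil, or_false] at hx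
      rcases hw with rfl | rfl <;> rcases hx with hx | hx | hx | hx <;>
        (first
          | (exfalso; have := List.cons_eq_cons.1 hx; omega)
          | (have heq := List.cons_eq_cons.1 hx
             exact absurd heq.2 (by rintro rfl; first | exact hu hu' | exact hv hu')))

/-! ### the two families of Hamiltonian paths -/

/-- `(PL a m).1` is a Hamiltonian path in `Π^a_m`; `(PL a m).2` is one in `Λ^a_m`.
They share their last strings, and for even `m` also their first strings. -/
def PL : ℕ → List (List ℕ) × List (List ℕ)
  | 0 => ([[]], [[]])
  | m+1 =>
    let P := (PL m).1
    let L := (PL m).2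
    (snk P L (a-1),
      if (m+1) % 2 = 1 then col a P ++ snk P L (a-1) else zig a P ++ snk P L (a-2))

lemma PL_succ_fst (m : ℕ) : (PL a (m+1)).1 = snk (PL a m).1 (PL a m).2 (a-1) := rfl

lemma PL_succ_snd (m : ℕ) : (PL a (m+1)).2 =
    (if (m+1) % 2 = 1 then col a (PL a m).1 ++ snk (PL a m).1 (PL a m).2 (a-1)
     else zig a (PL a m).1 ++ snk (PL a m).1 (PL a m).2 (a-2)) := rfl

lemma ok_false_cons {b : ℕ} {u : List ℕ} :
    ok a false (b :: u) ↔ b < a ∧ ok a (b == 0) u := by simp [ok]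

lemma ok_true_cons {b : ℕ} {u : List ℕ} :
    ok a true (b :: u) ↔ b ≤ a ∧ ok a (b == 0) u := by simp [ok]

/-- the full invariant pack about `(PL a m)`. -/
structure Good (m : ℕ) (P L : List (List ℕ)) : Prop where
  chainP : List.IsChain dist1 P
  chainL : List.IsChain dist1 L
  neP : P ≠ []
  neL : L ≠ []
  nodupP : P.Nodup
  nodupL : L.Nodup
  memP : ∀ w, w ∈ P ↔ (ok a false w ∧ w.length = m)
  memL : ∀ w, w ∈ L ↔ (ok a true w ∧ w.length = m)
  lastLP : L.getLast? = P.getLast?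
  headLP : m % 2 = 0 → L.head? = P.head?
  parP : Even P.length ↔ m % 2 = 1
  oddL : ¬ Even L.length

variable {a}

lemma good (ha : 2 ≤ a) (hae : Even a) : ∀ m : ℕ, Good a m (PL a m).1 (PL a m).2 := by
  intro m
  induction m with
  | zero =>
    refine { chainP := by simp [PL], chainL := by simp [PL], neP := by simp [PL],
             neL := by simp [PL], nodupP := by simp [PL], nodupL := by simp [PL],
             memP := ?_, memL := ?_, lastLP := rfl, headLP := fun _ => rfl,
             parP := by simp [PL], oddL := by simp [PL] }
    · intro w
      show w ∈ [[]] ↔ _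
      constructor
      · intro h
        simp only [List.mem_singleton] at h
        subst h
        exact ⟨trivial, rfl⟩
      · rintro ⟨-, h⟩
        simp [List.length_eq_zero_iff.1 h]
    · intro w
      show w ∈ [[]] ↔ _
      constructor
      · intro h
        simp only [List.mem_singleton] at h
        subst h
        exact ⟨trivial, rfl⟩
      · rintro ⟨-, h⟩
        simp [List.length_eq_zero_iff.1 h]
  | succ m G =>
    set P := (PL a m).1 with hPdef
    set L := (PL a m).2 with hLdef
    have ha1 : 1 ≤ a := by omega
    have hodd : (a - 1) % 2 = 1 := by rcases hae with ⟨k, rfl⟩; omega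
    have heven2 : (a - 2) % 2 = 0 := by rcases hae with ⟨k, rfl⟩; omega
    rcases exists_head? G.neP with ⟨hp, hhp⟩
    rcases exists_getLast? G.neP with ⟨lp, hlp⟩
    -- membership in the snake
    have memsnk : ∀ k, k ≤ a - 1 → ∀ w,
        w ∈ snk P L k ↔ ∃ b u, b ≤ k ∧ w = b :: u ∧ ok a (b == 0) u ∧ u.length = m := by
      intro k hk w
      rw [mem_snk]
      constructor
      · rintro ⟨b, u, hb, rfl, hu⟩
        by_cases hb0 : b = 0
        · subst hb0
          rw [if_pos rfl] at hu
          rcases (G.memL u).1 hu with ⟨hok, hlen⟩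
          exact ⟨0, u, hb, rfl, by simpa using hok, hlen⟩
        · rw [if_neg hb0] at hu
          rcases (G.memP u).1 hu with ⟨hok, hlen⟩
          have hb0' : (b == 0) = false := by simp [hb0]
          exact ⟨b, u, hb, rfl, by rw [hb0']; exact hok, hlen⟩
      · rintro ⟨b, u, hb, rfl, hok, hlen⟩
        refine ⟨b, u, hb, rfl, ?_⟩
        by_cases hb0 : b = 0
        · subst hb0
          rw [if_pos rfl]
          exact (G.memL u).2 ⟨by simpa using hok, hlen⟩
        · rw [if_neg hb0]
          have hb0' : (b == 0) = false := by simp [hb0]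
          rw [hb0'] at hok
          exact (G.memP u).2 ⟨hok, hlen⟩
    have memP1 : ∀ w, w ∈ snk P L (a-1) ↔ (ok a false w ∧ w.length = m + 1) := by
      intro w
      rw [memsnk (a-1) (le_refl _)]
      constructor
      · rintro ⟨b, u, hb, rfl, hok, hlen⟩
        exact ⟨(ok_false_cons a).2 ⟨by omega, hok⟩, by simp [hlen]⟩
      · rintro ⟨hok, hlen⟩
        match w with
        | [] => simp at hlen
        | b :: u =>
          rcases (ok_false_cons a).1 hok with ⟨hba, hok'⟩
          exact ⟨b, u, by omega, rfl, hok', by simpa using hlen⟩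
    constructor
    case chainP => exact snk_chain G.chainP G.chainL G.neP G.neL G.lastLP _
    case neP => exact snk_ne_nil G.neL _
    case nodupP => exact snk_nodup G.nodupP G.nodupL _
    case memP => exact memP1
    case lastLP =>
      rw [PL_succ_snd, PL_succ_fst]
      rw [← hPdef, ← hLdef]
      rw [snk_getLast? P L G.neL]
      split
      · rw [List.getLast?_append_of_ne_nil _ (snk_ne_nil G.neL _), snk_getLast? P L G.neL]
      · rw [List.getLast?_append_of_ne_nil _ (snk_ne_nil G.neL _), snk_getLast? P L G.neL]
    case headLP =>
      intro hm
      rw [PL_succ_snd, PL_succ_fst]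
      rw [← hPdef, ← hLdef]
      rw [if_neg (show ¬((m+1) % 2 = 1) by omega)]
      rw [List.head?_append_of_ne_nil _ (zig_ne_nil a G.neP)]
      rw [zig_head?, snk_head? G.neP G.lastLP, if_pos hodd]
    case chainL =>
      rw [PL_succ_snd]
      rw [← hPdef, ← hLdef]
      split
      · refine List.isChain_append.2
          ⟨col_chain G.chainP, snk_chain G.chainP G.chainL G.neP G.neL G.lastLP _, ?_⟩
        intro x hx y hy
        rw [col_getLast?, if_neg (by omega), hhp] at hx
        rw [snk_head? G.neP G.lastLP, if_pos hodd, hhp] at hy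
        simp at hx hy
        subst hx; subst hy
        exact dist1_cons_diff _ (dist_pred' ha1)
      · have hPeven : Even P.length := by
          rw [G.parP]; omega
        refine List.isChain_append.2
          ⟨zig_chain a ha1 G.chainP, snk_chain G.chainP G.chainL G.neP G.neL G.lastLP _, ?_⟩
        intro x hx y hy
        rw [zig_getLast? a G.neP hPeven, hlp] at hx
        rw [snk_head? G.neP G.lastLP, if_neg (by omega), hlp] at hy
        simp at hx hy
        subst hx; subst hy
        refine dist1_cons_diff _ ?_
        rw [show a - 1 = (a-2)+1 by omega]
        exact dist_succ_self _
    case neL =>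
      rw [PL_succ_snd]
      rw [← hPdef, ← hLdef]
      split
      · simp [col_ne_nil G.neP]
      · simp [zig_ne_nil a G.neP]
    case nodupL =>
      rw [PL_succ_snd]
      rw [← hPdef, ← hLdef]
      split
      · refine (col_nodup G.nodupP).append (snk_nodup G.nodupP G.nodupL _) ?_
        intro x hx hx'
        rcases mem_col.1 hx with ⟨u, hu, rfl⟩
        rcases mem_snk.1 hx' with ⟨b', u', hb', heq, -⟩
        have := (List.cons_eq_cons.1 heq).1
        omega
      · refine (zig_nodup a ha1 G.nodupP).append (snk_nodup G.nodupP G.nodupL _) ?_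
        intro x hx hx'
        rcases of_mem_zig a hx with ⟨u, hu, hw⟩
        rcases mem_snk.1 hx' with ⟨b', u', hb', heq, -⟩
        rcases hw with rfl | rfl <;> (have := (List.cons_eq_cons.1 heq).1; omega)
    case memL =>
      rw [PL_succ_snd]
      rw [← hPdef, ← hLdef]
      split
      case isTrue hpar =>
        intro w
        rw [List.mem_append, mem_col, memP1]
        constructor
        · rintro (⟨u, hu, rfl⟩ | ⟨hok, hlen⟩)
          · rcases (G.memP u).1 hu with ⟨hok, hlen⟩
            have : (a == 0) = false := by simp; omega
            exact ⟨(ok_true_cons a).2 ⟨le_refl a, by rw [this]; exact hok⟩, by simp [hlen]⟩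
          · match w, hok, hlen with
            | b :: u, hok, hlen =>
              rcases (ok_false_cons a).1 hok with ⟨hba, hok'⟩
              exact ⟨(ok_true_cons a).2 ⟨by omega, hok'⟩, hlen⟩
        · rintro ⟨hok, hlen⟩
          match w with
          | [] => simp at hlen
          | b :: u =>
            rcases (ok_true_cons a).1 hok with ⟨hba, hok'⟩
            by_cases hb : b = a
            · subst hb
              have hbz : (b == 0) = false := by simp; omega
              rw [hbz] at hok'
              exact Or.inl ⟨u, (G.memP u).2 ⟨hok', by simpa using hlen⟩, rfl⟩
            · refine Or.inr ⟨(ok_false_cons a).2 ⟨by omega, hok'⟩, hlen⟩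
      case isFalse hpar =>
        intro w
        rw [List.mem_append]
        constructor
        · rintro (hzig | hsnk)
          · rcases of_mem_zig a hzig with ⟨u, hu, hw⟩
            rcases (G.memP u).1 hu with ⟨hok, hlen⟩
            have haz : (a == 0) = false := by simp; omega
            have haz1 : (a - 1 == 0) = false := by simp; omega
            rcases hw with rfl | rfl
            · exact ⟨(ok_true_cons a).2 ⟨le_refl a, by rw [haz]; exact hok⟩, by simp [hlen]⟩
            · exact ⟨(ok_true_cons a).2 ⟨by omega, by rw [haz1]; exact hok⟩, by simp [hlen]⟩
          · rcases (memsnk (a-2) (by omega) w).1 hsnk with ⟨b, u, hb, rfl, hok, hlen⟩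
            exact ⟨(ok_true_cons a).2 ⟨by omega, hok⟩, by simp [hlen]⟩
        · rintro ⟨hok, hlen⟩
          match w with
          | [] => simp at hlen
          | b :: u =>
            rcases (ok_true_cons a).1 hok with ⟨hba, hok'⟩
            rcases Nat.lt_or_ge b (a-1) with hb | hb
            · refine Or.inr ((memsnk (a-2) (by omega) _).2 ⟨b, u, by omega, rfl, hok', by simpa using hlen⟩)
            · have hmem : u ∈ P := by
                have hbz : (b == 0) = false := by simp; omega
                rw [hbz] at hok'
                exact (G.memP u).2 ⟨hok', by simpa using hlen⟩
              rcases mem_zig_of a hmem with ⟨h1, h2⟩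
              have : b = a ∨ b = a - 1 := by omega
              rcases this with rfl | rfl
              · exact Or.inl h1
              · exact Or.inl h2
    case parP =>
      have h1 : ¬ Even (a - 1) := by rw [Nat.even_iff]; omega
      rw [PL_succ_fst]
      rw [← hPdef, ← hLdef]
      rw [snk_length, Nat.even_add, Nat.even_mul]
      simp only [h1, false_or, G.parP, iff_false, G.oddL]
      omega
    case oddL =>
      have h1 : ¬ Even (a - 1) := by rw [Nat.even_iff]; omega
      have h4 : Even (a - 2) := by rw [Nat.even_iff]; exact heven2
      rw [PL_succ_snd]
      rw [← hPdef, ← hLdef]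
      split
      · intro hcontra
        rw [List.length_append, col_length, snk_length, Nat.even_add, Nat.even_add,
          Nat.even_mul] at hcontra
        simp only [h1, false_or, G.oddL, iff_false] at hcontra
        tauto
      · intro hcontra
        rw [List.length_append, zig_length, snk_length, Nat.even_add, Nat.even_add] at hcontra
        have h5 : Even (2 * P.length) := ⟨P.length, by ring⟩
        have h6 : Even ((a - 2) * P.length) := Nat.even_mul.2 (Or.inl h4)
        rw [iff_true_intro h5, iff_true_intro h6, true_iff, true_iff] at hcontra
        exact G.oddL hcontra

/-! ### the Hamiltonian cycle -/

/-- the columns `k, k-1, …, 1` of the cycle, with content `Q` (the path minus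
its last vertex), traversed downward (reversed) iff the column index is odd. -/
def snk2 (Q : List (List ℕ)) : ℕ → List (List ℕ)
  | 0 => []
  | b+1 => col (b+1) Q.reverse ++ snk2 Q b

/-- the row `[1::y, 2::y, …, k::y]`. -/
def rowl (y : List ℕ) : ℕ → List (List ℕ)
  | 0 => []
  | k+1 => rowl y k ++ [(k+1) :: y]

lemma snk2_ne_nil {Q : List (List ℕ)} (hQ : Q ≠ []) (k : ℕ) : snk2 Q (k+1) ≠ [] := by
  simp only [snk2]
  exact fun h => (col_ne_nil (by simpa using hQ)) (List.append_eq_nil_iff.1 h).1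

lemma snk2_head? {Q : List (List ℕ)} (hQ : Q ≠ []) (k : ℕ) :
    (snk2 Q (k+1)).head? =
      ((k+1) :: ·) <$> (if (k+1) % 2 = 1 then Q.getLast? else Q.head?) := by
  simp only [snk2]
  rw [List.head?_append_of_ne_nil _ (col_ne_nil (by simpa using hQ)), col_head?]
  split <;> simp [List.head?_reverse, List.getLast?_reverse]

lemma snk2_getLast? {Q : List (List ℕ)} (hQ : Q ≠ []) (k : ℕ) :
    (snk2 Q (k+1)).getLast? = ((1:ℕ) :: ·) <$> Q.head? := by
  induction k with
  | zero =>
    show (col 1 Q.reverse ++ []).getLast? = _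
    rw [List.append_nil, col_getLast?]
    simp [List.getLast?_reverse]
  | succ b ih =>
    show (col (b+2) Q.reverse ++ snk2 Q (b+1)).getLast? = _
    rw [List.getLast?_append_of_ne_nil _ (snk2_ne_nil hQ b), ih]

lemma snk2_chain {Q : List (List ℕ)} (hQ : Q ≠ []) (hc : List.IsChain dist1 Q) (k : ℕ) :
    List.IsChain dist1 (snk2 Q k) := by
  induction k with
  | zero => simp [snk2]
  | succ b ih =>
    rw [show snk2 Q (b+1) = col (b+1) Q.reverse ++ snk2 Q b from rfl]
    refine List.isChain_append.2 ⟨col_chain (List.isChain_reverse.2 (hc.imp fun u v h => dist1_symm h)), ih, ?_⟩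
    intro x hx y hy
    match b, hy with
    | b+1, hy =>
      rw [col_getLast?] at hx
      rw [snk2_head? hQ] at hy
      rcases exists_head? hQ with ⟨hq, hhq⟩
      rcases exists_getLast? hQ with ⟨lq, hlq⟩
      by_cases hb : (b+1) % 2 = 1
      · rw [if_neg (by omega)] at hx
        rw [List.head?_reverse] at hx
        rw [if_pos hb] at hy
        rw [hlq] at hx hy
        simp at hx hy
        subst hx; subst hy
        exact dist1_cons_diff _ (dist_succ_self _)
      · rw [if_pos (by omega)] at hx
        rw [List.getLast?_reverse] at hx
        rw [if_neg hb] at hy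
        rw [hhq] at hx hy
        simp at hx hy
        subst hx; subst hy
        exact dist1_cons_diff _ (dist_succ_self _)

lemma mem_snk2 {Q : List (List ℕ)} {k : ℕ} {w : List ℕ} :
    w ∈ snk2 Q k ↔ ∃ b u, 1 ≤ b ∧ b ≤ k ∧ w = b :: u ∧ u ∈ Q := by
  induction k with
  | zero => simp [snk2]
  | succ b ih =>
    rw [show snk2 Q (b+1) = col (b+1) Q.reverse ++ snk2 Q b from rfl]
    rw [List.mem_append, mem_col, ih]
    constructor
    · rintro (⟨u, hu, rfl⟩ | ⟨b', u, hb1, hb2, rfl, hu⟩)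
      · exact ⟨b+1, u, by omega, le_refl _, rfl, by simpa using hu⟩
      · exact ⟨b', u, hb1, by omega, rfl, hu⟩
    · rintro ⟨b', u, hb1, hb2, rfl, hu⟩
      rcases Nat.lt_or_ge b' (b+1) with h | h
      · exact Or.inr ⟨b', u, hb1, by omega, rfl, hu⟩
      · have : b' = b + 1 := by omega
        subst this
        exact Or.inl ⟨u, by simpa using hu, rfl⟩

lemma snk2_nodup {Q : List (List ℕ)} (hQ : Q.Nodup) (k : ℕ) : (snk2 Q k).Nodup := by
  induction k with
  | zero => simp [snk2]
  | succ b ih =>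
    rw [show snk2 Q (b+1) = col (b+1) Q.reverse ++ snk2 Q b from rfl]
    refine (col_nodup (List.nodup_reverse.2 hQ)).append ih ?_
    intro x hx hx'
    rcases mem_col.1 hx with ⟨u, hu, rfl⟩
    rcases mem_snk2.1 hx' with ⟨b', u', hb1, hb2, heq, -⟩
    have := (List.cons_eq_cons.1 heq).1
    omega

lemma rowl_ne_nil (y : List ℕ) (k : ℕ) : rowl y (k+1) ≠ [] := by
  simp [rowl]

lemma rowl_getLast? (y : List ℕ) (k : ℕ) :
    (rowl y (k+1)).getLast? = some ((k+1) :: y) := by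
  simp [rowl]

lemma rowl_head? (y : List ℕ) (k : ℕ) :
    (rowl y (k+1)).head? = some ((1:ℕ) :: y) := by
  induction k with
  | zero => simp [rowl]
  | succ b ih =>
    show (rowl y (b+1) ++ [(b+2) :: y]).head? = _
    rw [List.head?_append_of_ne_nil _ (rowl_ne_nil y b), ih]

lemma rowl_chain (y : List ℕ) (k : ℕ) : List.IsChain dist1 (rowl y k) := by
  induction k with
  | zero => simp [rowl]
  | succ b ih =>
    show List.IsChain dist1 (rowl y b ++ [(b+1) :: y])
    refine List.isChain_append.2 ⟨ih, by simp, ?_⟩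
    intro x hx z hz
    match b, hx with
    | b+1, hx =>
      rw [rowl_getLast? y b] at hx
      simp at hx hz
      subst hx; subst hz
      exact dist1_cons_diff _ (dist_self_succ _)

lemma mem_rowl {y : List ℕ} {k : ℕ} {w : List ℕ} :
    w ∈ rowl y k ↔ ∃ b, 1 ≤ b ∧ b ≤ k ∧ w = b :: y := by
  induction k with
  | zero => simp [rowl]
  | succ b ih =>
    show w ∈ rowl y b ++ [(b+1) :: y] ↔ _
    rw [List.mem_append, ih]
    constructor
    · rintro (⟨b', h1, h2, rfl⟩ | h)
      · exact ⟨b', h1, by omega, rfl⟩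
      · simp at h; exact ⟨b+1, by omega, le_refl _, h⟩
    · rintro ⟨b', h1, h2, rfl⟩
      rcases Nat.lt_or_ge b' (b+1) with h | h
      · exact Or.inl ⟨b', h1, by omega, rfl⟩
      · have : b' = b+1 := by omega
        subst this
        simp
lemma rowl_nodup (y : List ℕ) (k : ℕ) : (rowl y k).Nodup := by
  induction k with
  | zero => simp [rowl]
  | succ b ih =>
    show (rowl y b ++ [(b+1) :: y]).Nodup
    refine ih.append (by simp) ?_
    intro x hx hx'
    simp at hx'
    subst hx'
    rcases mem_rowl.1 hx with ⟨b', h1, h2, heq⟩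
    have := (List.cons_eq_cons.1 heq).1
    omega

lemma head?_dropLast {α : Type*} (l : List α) (h : 2 ≤ l.length) :
    l.dropLast.head? = l.head? := by
  match l with
  | [] => simp at h
  | [x] => simp at h
  | x :: y :: t => rfl

lemma ok_replicate (f : Bool) (k : ℕ) (ha0 : 0 < a) : ok a f (List.replicate k 0) := by
  induction k generalizing f with
  | zero => trivial
  | succ j ih => exact ⟨by cases f <;> simp <;> omega, by simpa using ih (f := true)⟩

lemma rowl_length (y : List ℕ) (k : ℕ) : (rowl y k).length = k := by
  induction k with
  | zero => rfl
  | succ b ih => show (rowl y b ++ _).length = _; simp [ih]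

/-- the Hamiltonian cycle in `Π^a_{m+1}` for even `m ≥ 2` (i.e. odd `n = m+1 ≥ 3`). -/
theorem cycle_exists (ha : 2 ≤ a) (hae : Even a) {m : ℕ} (hm : 2 ≤ m) (hme : m % 2 = 0) :
    ∃ C : List (List ℕ), C ≠ [] ∧ 3 ≤ C.length ∧ List.IsChain dist1 C ∧
      (∀ x ∈ C.getLast?, ∀ y ∈ C.head?, dist1 x y) ∧ C.Nodup ∧
      (∀ w, w ∈ C ↔ (ok a false w ∧ w.length = m + 1)) := by
  obtain ⟨P, L, G⟩ : ∃ P L, Good a m P L := ⟨_, _, good ha hae m⟩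
  have hodd : (a - 1) % 2 = 1 := by rcases hae with ⟨k, rfl⟩; omega
  -- P has at least two elements
  have hw1 : List.replicate m 0 ∈ P :=
    (G.memP _).2 ⟨ok_replicate false m (by omega), by simp⟩
  have hw2 : 1 :: List.replicate (m-1) 0 ∈ P :=
    (G.memP _).2 ⟨⟨by simp; omega, by simpa using ok_replicate (a := a) false (m-1) (by omega)⟩,
      by simp; omega⟩
  have hP2 : 2 ≤ P.length := by
    rcases P with _ | ⟨c, _ | ⟨d, t⟩⟩
    · simp at hw1
    · exfalso
      simp only [List.mem_singleton] at hw1 hw2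
      have h0 : (List.replicate m 0).head? = (1 :: List.replicate (m-1) 0).head? := by
        rw [hw1, hw2]
      rw [show m = (m-1)+1 by omega, List.replicate_succ] at h0
      simp at h0
    · simp
  set y := P.getLast G.neP with hydef
  set Q := P.dropLast with hQdef
  have hPsplit : Q ++ [y] = P := List.dropLast_append_getLast G.neP
  have hQne : Q ≠ [] := by
    intro h
    rw [h] at hPsplit
    rw [← hPsplit] at hP2
    simp at hP2
  have hQchain : List.IsChain dist1 Q := by
    have := G.chainP
    rw [← hPsplit] at this
    exact (List.isChain_append.1 this).1
  have hQlast : ∀ x ∈ Q.getLast?, dist1 x y := by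
    have := G.chainP
    rw [← hPsplit] at this
    intro x hx
    exact (List.isChain_append.1 this).2.2 x hx y rfl
  have hQhead : Q.head? = P.head? := head?_dropLast P hP2
  have hQnodup : Q.Nodup := by
    have := G.nodupP
    rw [← hPsplit] at this
    exact this.of_append_left
  have hynotQ : y ∉ Q := by
    have := G.nodupP
    rw [← hPsplit] at this
    intro hy
    exact (List.disjoint_of_nodup_append this) hy (by simp)
  have hymem : y ∈ P := List.getLast_mem G.neP
  have hLlast : L.getLast? = some y := by rw [G.lastLP, hydef, List.getLast?_eq_getLast]
  rcases exists_head? G.neP with ⟨x, hx⟩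
  have hLhead : L.head? = some x := by rw [G.headLP hme, hx]
  -- the cycle
  have hk1 : a - 1 = (a-2)+1 := by omega
  rcases exists_getLast? hQne with ⟨lq, hlq⟩
  refine ⟨L.map ((0:ℕ) :: ·) ++ rowl y (a-1) ++ snk2 Q (a-1), ?_, ?_, ?_, ?_, ?_, ?_⟩
  · simp [G.neL]
  · have h1 : 1 ≤ L.length := List.length_pos_iff.2 G.neL
    have h2 : 1 ≤ (snk2 Q (a-1)).length :=
      List.length_pos_iff.2 (by rw [hk1]; exact snk2_ne_nil hQne _)
    have h3 : (rowl y (a-1)).length = a - 1 := rowl_length y _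
    simp only [List.length_append, List.length_map, h3]
    omega
  · refine List.isChain_append.2 ⟨List.isChain_append.2 ⟨?_, rowl_chain y _, ?_⟩, ?_, ?_⟩
    · exact (List.isChain_map _).2 (G.chainL.imp fun u v h => dist1_cons_same 0 h)
    · intro p hp q hq
      rw [List.getLast?_map, hLlast] at hp
      rw [hk1, rowl_head? y _] at hq
      simp at hp hq
      subst hp; subst hq
      exact dist1_cons_diff _ (dist_self_succ 0)
    · exact snk2_chain hQne hQchain _
    · intro p hp q hq
      rw [List.getLast?_append_of_ne_nil _ (by rw [hk1]; exact rowl_ne_nil y _), hk1,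
        rowl_getLast? y _] at hp
      rw [hk1, snk2_head? hQne, if_pos (by omega), hlq] at hq
      simp at hp hq
      subst hp; subst hq
      rw [← hk1]
      exact dist1_cons_same _ (dist1_symm (hQlast lq hlq))
  · intro p hp q hq
    rw [List.getLast?_append_of_ne_nil _ (by rw [hk1]; exact snk2_ne_nil hQne _), hk1,
      snk2_getLast? hQne, hQhead, hx] at hp
    rw [List.head?_append_of_ne_nil _ (by simp [G.neL]),
      List.head?_append_of_ne_nil _ (by simp [G.neL]),
      List.head?_map, hLhead] at hq
    simp at hp hq
    subst hp; subst hq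
    exact dist1_cons_diff _ (dist_succ_self 0)
  · refine List.Nodup.append (List.Nodup.append ?_ (rowl_nodup y _) ?_) ?_ ?_
    · exact G.nodupL.map (fun u v huv => by simpa using huv)
    · intro p hp hp'
      rcases List.mem_map.1 hp with ⟨u, hu, rfl⟩
      rcases mem_rowl.1 hp' with ⟨b, hb1, hb2, heq⟩
      have := (List.cons_eq_cons.1 heq).1
      omega
    · exact snk2_nodup hQnodup _
    · intro p hp hp'
      rcases mem_snk2.1 hp' with ⟨b, u, hb1, hb2, rfl, hu⟩
      rcases List.mem_append.1 hp with hp | hp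
      · rcases List.mem_map.1 hp with ⟨u', hu', heq⟩
        have := (List.cons_eq_cons.1 heq).1
        omega
      · rcases mem_rowl.1 hp with ⟨b', hb1', hb2', heq⟩
        rcases List.cons_eq_cons.1 heq with ⟨-, h2⟩
        exact hynotQ (h2 ▸ hu)
  · intro w
    rw [List.mem_append, List.mem_append, List.mem_map, mem_rowl, mem_snk2]
    constructor
    · rintro ((⟨u, hu, rfl⟩ | ⟨b, hb1, hb2, rfl⟩) | ⟨b, u, hb1, hb2, rfl, hu⟩)
      · rcases (G.memL u).1 hu with ⟨hok, hlen⟩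
        exact ⟨(ok_false_cons a).2 ⟨by omega, by simpa using hok⟩, by simp [hlen]⟩
      · rcases (G.memP y).1 hymem with ⟨hok, hlen⟩
        have hbz : (b == 0) = false := by simp; omega
        exact ⟨(ok_false_cons a).2 ⟨by omega, by rw [hbz]; exact hok⟩, by simp [hlen]⟩
      · have hu' : u ∈ P := (List.dropLast_sublist P).subset hu
        rcases (G.memP u).1 hu' with ⟨hok, hlen⟩
        have hbz : (b == 0) = false := by simp; omega
        exact ⟨(ok_false_cons a).2 ⟨by omega, by rw [hbz]; exact hok⟩, by simp [hlen]⟩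
    · rintro ⟨hok, hlen⟩
      match w with
      | [] => simp at hlen
      | c :: u =>
        rcases (ok_false_cons a).1 hok with ⟨hca, hok'⟩
        have hlu : u.length = m := by simpa using hlen
        by_cases hc : c = 0
        · subst hc
          exact Or.inl (Or.inl ⟨u, (G.memL u).2 ⟨by simpa using hok', hlu⟩, rfl⟩)
        · have hbz : (c == 0) = false := by simp [hc]
          rw [hbz] at hok'
          have hu : u ∈ P := (G.memP u).2 ⟨hok', hlu⟩
          rw [← hPsplit, List.mem_append] at hu
          rcases hu with hu | hu
          · exact Or.inr ⟨c, u, by omega, by omega, rfl, hu⟩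
          · simp only [List.mem_singleton] at hu
            subst hu
            exact Or.inl (Or.inr ⟨c, by omega, by omega, rfl⟩)

/-! ### index characterisation of validity -/

lemma ok_iff_get {a : ℕ} (ha : 1 ≤ a) : ∀ (f : Bool) (w : List ℕ), ok a f w ↔
    ((∀ (i : ℕ) (h : i < w.length), w.get ⟨i, h⟩ ≤ a) ∧
     (∀ (i : ℕ) (h : i < w.length), w.get ⟨i, h⟩ = a →
        (i = 0 ∧ f = true) ∨ ∃ j, ∃ hj : j < w.length, j + 1 = i ∧ w.get ⟨j, hj⟩ = 0)) := by
  intro f w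
  induction w generalizing f with
  | nil => simp [ok]
  | cons c u ih =>
    rw [ok_cons]
    constructor
    · rintro ⟨h1, h2⟩
      rcases (ih (c == 0)).1 h2 with ⟨A, B⟩
      constructor
      · intro i hi
        match i with
        | 0 => cases f <;> simp at h1 ⊢ <;> omega
        | j+1 => simpa using A j (by simpa using hi)
      · intro i hi hget
        match i with
        | 0 =>
          simp at hget
          cases f
          · simp at h1; omega
          · exact Or.inl ⟨rfl, rfl⟩
        | j+1 =>
          rcases B j (by simpa using hi) (by simpa using hget) with
            ⟨hj0, hcz⟩ | ⟨j', hj', e, h0⟩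
          · subst hj0
            refine Or.inr ⟨0, by simp, rfl, ?_⟩
            simpa using hcz
          · refine Or.inr ⟨j'+1, by simp; omega, by omega, by simpa using h0⟩
    · rintro ⟨A, B⟩
      constructor
      · have hc := A 0 (by simp)
        simp at hc
        cases f
        · simp only [if_neg Bool.false_ne_true]
          rcases Nat.lt_or_ge c a with h | h
          · exact h
          · exfalso
            have hca : c = a := by omega
            rcases B 0 (by simp) (by simpa using hca) with ⟨-, hf⟩ | ⟨j, hj, e, -⟩
            · simp at hf
            · omega
        · simpa using hc
      · refine (ih (c == 0)).2 ⟨?_, ?_⟩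
        · intro j hj
          simpa using A (j+1) (by simp; omega)
        · intro j hj hget
          rcases B (j+1) (by simp; omega) (by simpa using hget) with ⟨h0, -⟩ | ⟨j', hj', e, h0⟩
          · omega
          · match j', hj', e, h0 with
            | 0, hj', e, h0 =>
              have hj0 : j = 0 := by omega
              subst hj0
              refine Or.inl ⟨rfl, ?_⟩
              have hc0 : c = 0 := by simpa using h0
              simp [hc0]
            | t+1, hj', e, h0 =>
              exact Or.inr ⟨t, by omega, by omega, by simpa using h0⟩

/-! ### conversion to the metallic cube -/

variable {n : ℕ}

/-- build a metallic-cube vertex out of a valid string. -/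
def toVert {a : ℕ} (ha : 1 ≤ a) (w : List ℕ) (h1 : ok a false w) (h2 : w.length = n) :
    MetallicVertex a n :=
  ⟨fun i => ⟨w.get ⟨i.1, by omega⟩, by
      have := ok_le a h1 (w.get ⟨i.1, by omega⟩) (w.get_mem ⟨i.1, by omega⟩)
      omega⟩, by
    intro i hi
    rcases ((ok_iff_get ha false w).1 h1).2 i.1 (by omega) hi with ⟨-, hf⟩ | ⟨j, hj, e, h0⟩
    · simp at hf
    · exact ⟨⟨j, by omega⟩, e, h0⟩⟩

lemma toVert_inj {a : ℕ} (ha : 1 ≤ a) {w w' : List ℕ} {h1 h2 h1' h2'}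
    (h : toVert (n := n) ha w h1 h2 = toVert ha w' h1' h2') : w = w' := by
  apply List.ext_get (by omega)
  intro i hi1 hi2
  have h3 := congrFun (congrArg Subtype.val h) ⟨i, by omega⟩
  simpa [toVert] using congrArg Fin.val h3

lemma toVert_adj {a : ℕ} (ha : 1 ≤ a) {w w' : List ℕ} {h1 h2 h1' h2'}
    (hd : dist1 w w') :
    (metallicCube a n).Adj (toVert ha w h1 h2) (toVert ha w' h1' h2') := by
  show (∑ i : Fin n, Nat.dist _ _) = 1
  have hz : List.zipWith Nat.dist w w' =
      List.ofFn (fun i : Fin n => Nat.dist (w.get ⟨i.1, by omega⟩) (w'.get ⟨i.1, by omega⟩)) := by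
    apply List.ext_get
    · simp [h2, h2']
    · intro i hi1 hi2
      simp [List.get_eq_getElem, List.getElem_zipWith, List.getElem_ofFn]
  have := hd
  unfold dist1 at this
  rw [hz, List.sum_ofFn] at this
  exact this

lemma exists_toVert {a : ℕ} (ha : 1 ≤ a) (v : MetallicVertex a n) :
    ∃ w h1 h2, toVert (n := n) ha w h1 h2 = v ∧ w = List.ofFn (fun i => (v.1 i : ℕ)) := by
  set w := List.ofFn (fun i => (v.1 i : ℕ)) with hw
  have h2 : w.length = n := by simp [hw]
  have hget : ∀ (i : ℕ) (h : i < w.length), w.get ⟨i, h⟩ = (v.1 ⟨i, by omega⟩ : ℕ) := by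
    intro i h
    simp [hw, List.get_ofFn]
  have h1 : ok a false w := by
    refine (ok_iff_get ha false w).2 ⟨?_, ?_⟩
    · intro i hi
      rw [hget i hi]
      exact Nat.lt_succ_iff.1 (v.1 ⟨i, by omega⟩).2
    · intro i hi hia
      rw [hget i hi] at hia
      rcases v.2 ⟨i, by omega⟩ hia with ⟨j, hj1, hj0⟩
      exact Or.inr ⟨j.1, by omega, by simpa using hj1, by rw [hget j.1 (by omega)]; simpa using hj0⟩
  refine ⟨w, h1, h2, ?_, rfl⟩
  apply Subtype.ext
  funext i
  apply Fin.ext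
  show w.get _ = (v.1 i : ℕ)
  rw [hget i.1 (by omega)]

/-! ### building walks from lists -/

open SimpleGraph

def buildWalk {V : Type*} {G : SimpleGraph V} :
    ∀ (l : List V) (_ : List.IsChain G.Adj l) (hne : l ≠ []),
      G.Walk (l.head hne) (l.getLast hne)
  | [v], _, _ => Walk.nil
  | v :: v' :: t, h, _ =>
    Walk.cons (List.isChain_cons_cons.1 h).1
      ((buildWalk (v' :: t) (List.isChain_cons_cons.1 h).2 (by simp)).copy rfl
        (by exact (List.getLast_cons (by simp)).symm))

lemma buildWalk_support {V : Type*} {G : SimpleGraph V} :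
    ∀ (l : List V) (h : List.IsChain G.Adj l) (hne : l ≠ []),
      (buildWalk l h hne).support = l
  | [v], _, _ => rfl
  | v :: v' :: t, h, _ => by
    simp only [buildWalk, Walk.support_cons, Walk.support_copy]
    exact congrArg (v :: ·) (buildWalk_support (v' :: t) _ _)

lemma buildWalk_length {V : Type*} {G : SimpleGraph V}
    (l : List V) (h : List.IsChain G.Adj l) (hne : l ≠ []) :
    (buildWalk l h hne).length + 1 = l.length := by
  have := congrArg List.length (buildWalk_support l h hne)
  rwa [Walk.length_support] at this

lemma endpoint_edge {V : Type*} {G : SimpleGraph V} {s t : V} :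
    ∀ (p : G.Walk s t) (_ : p.support.Nodup) (z : V) (_ : s(t, z) ∈ p.edges),
      ∃ (q : G.Walk s z) (h : G.Adj z t), p = q.concat h := by
  intro p
  induction p with
  | nil => intro _ z hz; simp at hz
  | @cons s u t h q ih =>
    intro hnd z hz
    rw [Walk.edges_cons, List.mem_cons] at hz
    rcases hz with hz | hz
    · rw [Sym2.eq_iff] at hz
      rcases hz with ⟨rfl, rfl⟩ | ⟨rfl, rfl⟩
      · exfalso
        rw [Walk.support_cons] at hnd
        rcases List.nodup_cons.1 hnd with ⟨hs, -⟩
        exact hs q.end_mem_support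
      · have hq : q.support.Nodup := by
          rw [Walk.support_cons] at hnd
          exact (List.nodup_cons.1 hnd).2
        have : q = Walk.nil := (Walk.isPath_iff_eq_nil).1 (Walk.IsPath.mk' hq)
        subst this
        exact ⟨Walk.nil, h, rfl⟩
    · have hq : q.support.Nodup := by
        rw [Walk.support_cons] at hnd
        exact (List.nodup_cons.1 hnd).2
      rcases ih hq z hz with ⟨q0, h0, rfl⟩
      exact ⟨Walk.cons h q0, h0, by rw [Walk.concat_cons]⟩

lemma chain'_and_mem {α : Type*} {R : α → α → Prop} {l : List α} (h : List.IsChain R l) :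
    List.IsChain (fun x y => R x y ∧ x ∈ l ∧ y ∈ l) l := by
  rw [List.isChain_iff_getElem] at h ⊢
  intro i hi
  exact ⟨h i hi, List.getElem_mem _, List.getElem_mem _⟩

end Metallic

/-- for `a ≥ 2` even and `n ≥ 3` odd, the metallic cube `Π^a_n` is
Hamiltonian. -/
theorem metallic_hamiltonian_cycle (a n : ℕ) (ha : 2 ≤ a) (hae : Even a)
    (hn : 3 ≤ n) (hno : Odd n) :
    (metallicCube a n).IsHamiltonian := by
  classical
  intro _
  have ha1 : (1:ℕ) ≤ a := by omega
  obtain ⟨m, rfl⟩ : ∃ m, n = m + 1 := ⟨n-1, by omega⟩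
  have hm2 : 2 ≤ m := by omega
  have hme : m % 2 = 0 := by rcases hno with ⟨t, ht⟩; omega
  obtain ⟨C, hCne, hC3, hCchain, hCwrap, hCnodup, hCmem⟩ :=
    Metallic.cycle_exists ha hae hm2 hme
  rcases C with _ | ⟨c0, _ | ⟨c1, _ | ⟨c2, cs⟩⟩⟩
  · exact absurd rfl hCne
  · simp at hC3
  · simp at hC3
  clear hCne hC3
  set T : List (List ℕ) := c1 :: c2 :: cs with hT
  -- the vertex-producing map
  have hok0 : Metallic.ok a false (List.replicate (m+1) 0) ∧
      (List.replicate (m+1) 0).length = m + 1 :=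
    ⟨Metallic.ok_replicate false (m+1) (by omega), by simp⟩
  set F : List ℕ → MetallicVertex a (m+1) := fun w =>
    if h : Metallic.ok a false w ∧ w.length = m + 1 then Metallic.toVert ha1 w h.1 h.2
    else Metallic.toVert ha1 _ hok0.1 hok0.2 with hFdef
  have hFadj : ∀ x y : List ℕ, x ∈ c0 :: T → y ∈ c0 :: T → Metallic.dist1 x y →
      (metallicCube a (m+1)).Adj (F x) (F y) := by
    intro x y hx hy hd
    have hx' := (hCmem x).1 hx
    have hy' := (hCmem y).1 hy
    rw [hFdef]
    simp only [dif_pos hx', dif_pos hy']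
    exact Metallic.toVert_adj ha1 hd
  -- adjacency facts
  have hdist01 : Metallic.dist1 c0 c1 := (List.isChain_cons_cons.1 hCchain).1
  have hTlast : (c0 :: T).getLast? = T.getLast? := List.getLast?_cons_cons
  obtain ⟨cl, hcl⟩ := Metallic.exists_getLast? (l := T) (by simp [hT])
  have hclC : (c0 :: T).getLast? = some cl := by rw [hTlast, hcl]
  have hclmem : cl ∈ c0 :: T := List.mem_of_mem_getLast? hclC
  have hdwrap : Metallic.dist1 cl c0 := hCwrap cl hclC c0 rfl
  have hadj01 : (metallicCube a (m+1)).Adj (F c0) (F c1) :=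
    hFadj c0 c1 (by simp) (by simp [hT]) hdist01
  have hadjwrap : (metallicCube a (m+1)).Adj (F cl) (F c0) :=
    hFadj cl c0 hclmem (by simp) hdwrap
  -- the vertex cycle list
  set l1 : List (MetallicVertex a (m+1)) := T.map F ++ [F c0] with hl1
  have hl1ne : l1 ≠ [] := by simp [hl1]
  have hchainT : List.IsChain (metallicCube a (m+1)).Adj (T.map F) := by
    refine (List.isChain_map F).2 ?_
    have := Metallic.chain'_and_mem hCchain
    have h2 := (List.isChain_cons_cons.1 this).2
    exact h2.imp fun x y ⟨hd, hx, hy⟩ => hFadj x y hx hy hd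
  have hl1chain : List.IsChain (metallicCube a (m+1)).Adj l1 := by
    refine List.isChain_append.2 ⟨hchainT, by simp, ?_⟩
    intro x hx y hy
    rw [List.getLast?_map, hcl] at hx
    simp only [Option.map_some, Option.mem_def, Option.some.injEq] at hx
    simp only [List.head?_cons, Option.mem_def, Option.some.injEq] at hy
    subst hx; subst hy
    exact hadjwrap
  -- nodup and membership
  have hl1nodup : l1.Nodup := by
    have hperm : (T.map F ++ [F c0]).Perm (F c0 :: T.map F) := List.perm_append_singleton _ _
    rw [hl1]
    refine hperm.nodup_iff.2 ?_
    have : (F c0 :: T.map F) = (c0 :: T).map F := by simp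
    rw [this]
    refine hCnodup.map_on ?_
    intro x hx y hy hxy
    have hx' := (hCmem x).1 hx
    have hy' := (hCmem y).1 hy
    rw [hFdef] at hxy
    simp only [dif_pos hx', dif_pos hy'] at hxy
    exact Metallic.toVert_inj ha1 hxy
  have hl1mem : ∀ v : MetallicVertex a (m+1), v ∈ l1 := by
    intro v
    obtain ⟨w, h1, h2, hv, -⟩ := Metallic.exists_toVert ha1 v
    have hwC : w ∈ c0 :: T := (hCmem w).2 ⟨h1, h2⟩
    have hFw : F w = v := by
      rw [hFdef]
      simp only [dif_pos (⟨h1, h2⟩ : Metallic.ok a false w ∧ w.length = m + 1)]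
      exact hv
    have hperm : (T.map F ++ [F c0]).Perm (F c0 :: T.map F) := List.perm_append_singleton _ _
    rw [hl1]
    refine hperm.mem_iff.2 ?_
    have : (F c0 :: T.map F) = (c0 :: T).map F := by simp
    rw [this]
    exact List.mem_map.2 ⟨w, hwC, hFw⟩
  -- the walk
  have hl1head : l1.head hl1ne = F c1 := by simp [hl1, hT]
  have hl1last : l1.getLast hl1ne = F c0 := by
    have h1 : l1.getLast? = some (F c0) := by
      rw [hl1, List.getLast?_append_of_ne_nil _ (by simp)]; rfl
    have h2 : l1.getLast? = some (l1.getLast hl1ne) := List.getLast?_eq_getLast _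
    rw [h1] at h2
    exact (Option.some.inj h2).symm
  let p : (metallicCube a (m+1)).Walk (F c1) (F c0) :=
    (Metallic.buildWalk l1 hl1chain hl1ne).copy hl1head hl1last
  have hsupp : p.support = l1 := by
    show ((Metallic.buildWalk l1 hl1chain hl1ne).copy hl1head hl1last).support = l1
    rw [SimpleGraph.Walk.support_copy, Metallic.buildWalk_support]
  have hpnodup : p.support.Nodup := by rw [hsupp]; exact hl1nodup
  have hF01 : F c0 ≠ F c1 := by
    intro h
    have h0 : F c0 ∈ l1 := by rw [← hl1last]; exact List.getLast_mem hl1ne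
    have hcount := hl1nodup
    -- c0 ≠ c1 from C nodup, F injective on C
    have hc01 : c0 ≠ c1 := by
      rcases List.nodup_cons.1 hCnodup with ⟨hn0, -⟩
      intro he; exact hn0 (by simp [hT, he])
    apply hc01
    have hx' := (hCmem c0).1 (by simp)
    have hy' := (hCmem c1).1 (by simp [hT])
    rw [hFdef] at h
    simp only [dif_pos hx', dif_pos hy'] at h
    exact Metallic.toVert_inj ha1 h
  refine ⟨F c0, SimpleGraph.Walk.cons hadj01 p, ?_⟩
  rw [SimpleGraph.Walk.isHamiltonianCycle_iff_isCycle_and_support_count_tail_eq_one]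
  constructor
  · rw [SimpleGraph.Walk.cons_isCycle_iff]
    refine ⟨SimpleGraph.Walk.IsPath.mk' hpnodup, ?_⟩
    intro hmem
    obtain ⟨q, hq, heq⟩ := Metallic.endpoint_edge p hpnodup (F c1) hmem
    have hqsupp : q.support.Nodup := by
      have := hpnodup
      rw [heq, SimpleGraph.Walk.support_concat] at this
      exact this.of_append_left
    have hqnil : q = SimpleGraph.Walk.nil :=
      (SimpleGraph.Walk.isPath_iff_eq_nil).1 (SimpleGraph.Walk.IsPath.mk' hqsupp)
    subst hqnil
    have hlen : p.support.length = 2 := by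
      rw [heq, SimpleGraph.Walk.support_concat]
      simp
    rw [hsupp] at hlen
    simp [hl1, hT] at hlen
  · intro v
    rw [SimpleGraph.Walk.support_cons, List.tail_cons, hsupp]
    exact @List.count_eq_one_of_mem _ instBEqOfDecidableEq (by infer_instance) _ _ hl1nodup (hl1mem v)
end
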